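/- Let G and H be locally compact Hausdorff groups. If φ : G^{luc} → H^{luc} is a surjective semigroup homomorphism, then φ(e_G) = e_H and φ(x) ∈ H for every x ∈ G, i.e., φ(G) ⊆ H. -/

import Mathlib

open scoped BoundedContinuousFunction
open Filter Topology

set_option synthInstance.maxHeartbeats 1000000
set_option maxHeartbeats 1000000

namespace LucPaper

variable {G : Type*} [Group G] [TopologicalSpace G] [IsTopologicalGroup G]

/-- Left translation of a bounded continuous function: `lTrans g f x = f (g * x)`. -/
noncomputable def lTrans (g : G) (f : G →ᵇ ℂ) : G →ᵇ ℂ :=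
  f.compContinuous ⟨fun x => g * x, continuous_const.mul continuous_id⟩

@[simp] lemma lTrans_apply (g : G) (f : G →ᵇ ℂ) (x : G) : lTrans g f x = f (g * x) := rfl

lemma lTrans_mul (g : G) (f h : G →ᵇ ℂ) : lTrans g (f * h) = lTrans g f * lTrans g h := by
  ext x; simp [lTrans]

lemma lTrans_add (g : G) (f h : G →ᵇ ℂ) : lTrans g (f + h) = lTrans g f + lTrans g h := by
  ext x; simp [lTrans]

lemma lTrans_smul (g : G) (c : ℂ) (f : G →ᵇ ℂ) : lTrans g (c • f) = c • lTrans g f := by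
  ext x; simp [lTrans]

lemma lTrans_sub (g : G) (f h : G →ᵇ ℂ) : lTrans g (f - h) = lTrans g f - lTrans g h := by
  ext x; simp [lTrans]

lemma lTrans_lTrans (x g : G) (f : G →ᵇ ℂ) : lTrans x (lTrans g f) = lTrans (g * x) f := by
  ext y; simp [mul_assoc]

lemma norm_lTrans_le (g : G) (f : G →ᵇ ℂ) : ‖lTrans g f‖ ≤ ‖f‖ :=
  f.norm_compContinuous_le _

lemma lTrans_algebraMap (g : G) (c : ℂ) :
    lTrans g (algebraMap ℂ (G →ᵇ ℂ) c) = algebraMap ℂ (G →ᵇ ℂ) c := by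
  ext x; simp [lTrans]

lemma algebraMap_mem_luc (c : ℂ) :
    Continuous fun g : G => lTrans g (algebraMap ℂ (G →ᵇ ℂ) c) := by
  have e : (fun g : G => lTrans g (algebraMap ℂ (G →ᵇ ℂ) c)) =
      fun _ : G => algebraMap ℂ (G →ᵇ ℂ) c :=
    funext fun g => lTrans_algebraMap g c
  rw [e]
  exact continuous_const

/-- The `C*`-algebra `LUC(G)` of bounded left uniformly continuous complex functions on `G`,
realized as a subalgebra of the bounded continuous functions. -/
noncomputable def LUC (G : Type*) [Group G] [TopologicalSpace G] [IsTopologicalGroup G] :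
    Subalgebra ℂ (G →ᵇ ℂ) where
  carrier := {f | Continuous fun g : G => lTrans g f}
  mul_mem' {f h} hf hh := by
    have hf' : Continuous fun g : G => lTrans g f := hf
    have hh' : Continuous fun g : G => lTrans g h := hh
    have e : (fun g : G => lTrans g (f * h)) = fun g => lTrans g f * lTrans g h :=
      funext fun g => lTrans_mul g f h
    show Continuous fun g : G => lTrans g (f * h)
    rw [e]
    exact hf'.mul hh'
  add_mem' {f h} hf hh := by
    have hf' : Continuous fun g : G => lTrans g f := hf
    have hh' : Continuous fun g : G => lTrans g h := hh
    have e : (fun g : G => lTrans g (f + h)) = fun g => lTrans g f + lTrans g h :=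
      funext fun g => lTrans_add g f h
    show Continuous fun g : G => lTrans g (f + h)
    rw [e]
    exact hf'.add hh'
  algebraMap_mem' c := algebraMap_mem_luc c


section Instances
set_option synthInstance.maxHeartbeats 1000000 in
noncomputable instance instLUCNormedAddCommGroup (G : Type*) [Group G] [TopologicalSpace G]
    [IsTopologicalGroup G] : NormedAddCommGroup (LUC G) := inferInstance

set_option synthInstance.maxHeartbeats 1000000 in
noncomputable instance instLUCNormedSpace (G : Type*) [Group G] [TopologicalSpace G]
    [IsTopologicalGroup G] : NormedSpace ℂ (LUC G) := inferInstance

set_option synthInstance.maxHeartbeats 1000000 in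
noncomputable instance instLUCNormedRing (G : Type*) [Group G] [TopologicalSpace G]
    [IsTopologicalGroup G] : NormedRing (LUC G) := inferInstance
end Instances

/-- `LUC(G)^*`, the dual Banach space of `LUC(G)`. -/
noncomputable abbrev Ld (G : Type*) [Group G] [TopologicalSpace G] [IsTopologicalGroup G] :=
  StrongDual ℂ (LUC G)

/-- Left translation as a map `LUC G → LUC G`. -/
noncomputable def lTransL (g : G) (f : LUC G) : LUC G :=
  ⟨lTrans g (f : G →ᵇ ℂ), by
    have hf : Continuous fun h : G => lTrans h (f : G →ᵇ ℂ) := f.2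
    have e : (fun h : G => lTrans h (lTrans g (f : G →ᵇ ℂ))) =
        (fun k : G => lTrans k (f : G →ᵇ ℂ)) ∘ fun h : G => g * h := by
      funext h
      exact lTrans_lTrans h g (f : G →ᵇ ℂ)
    show Continuous fun h : G => lTrans h (lTrans g (f : G →ᵇ ℂ))
    rw [e]
    exact hf.comp (continuous_const.mul continuous_id)⟩

@[simp] lemma lTransL_coe (g : G) (f : LUC G) :
    (lTransL g f : G →ᵇ ℂ) = lTrans g (f : G →ᵇ ℂ) := rfl

lemma continuous_lTransL (f : LUC G) : Continuous fun g : G => lTransL g f :=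
  Continuous.subtype_mk f.2 _

lemma norm_lTransL_le (g : G) (f : LUC G) : ‖lTransL g f‖ ≤ ‖f‖ :=
  norm_lTrans_le g (f : G →ᵇ ℂ)

lemma lTransL_add (g : G) (f h : LUC G) : lTransL g (f + h) = lTransL g f + lTransL g h :=
  Subtype.ext (lTrans_add g _ _)

lemma lTransL_smul (g : G) (c : ℂ) (f : LUC G) : lTransL g (c • f) = c • lTransL g f :=
  Subtype.ext (lTrans_smul g c _)

lemma lTransL_sub (g : G) (f h : LUC G) : lTransL g (f - h) = lTransL g f - lTransL g h :=
  Subtype.ext (lTrans_sub g _ _)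

lemma lTransL_mul (g : G) (f h : LUC G) : lTransL g (f * h) = lTransL g f * lTransL g h :=
  Subtype.ext (lTrans_mul g _ _)

lemma lTransL_lTransL (x g : G) (f : LUC G) : lTransL x (lTransL g f) = lTransL (g * x) f :=
  Subtype.ext (lTrans_lTrans x g _)

end LucPaper

namespace LucPaper
variable {G : Type*} [Group G] [TopologicalSpace G] [IsTopologicalGroup G]

/-- The function `n f : g ↦ ⟨n, l_g f⟩` as a bounded continuous function. -/
noncomputable def arensBCF (n : Ld G) (f : LUC G) : G →ᵇ ℂ :=
  BoundedContinuousFunction.ofNormedAddCommGroup (fun g : G => n (lTransL g f))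
    (n.continuous.comp (continuous_lTransL f)) (‖n‖ * ‖f‖)
    (fun g => le_trans (n.le_opNorm _)
      (mul_le_mul_of_nonneg_left (norm_lTransL_le g f) (norm_nonneg n)))

@[simp] lemma arensBCF_apply (n : Ld G) (f : LUC G) (g : G) :
    arensBCF n f g = n (lTransL g f) := rfl

lemma norm_arensBCF_le (n : Ld G) (f : LUC G) : ‖arensBCF n f‖ ≤ ‖n‖ * ‖f‖ :=
  BoundedContinuousFunction.norm_ofNormedAddCommGroup_le _
    (mul_nonneg (norm_nonneg n) (norm_nonneg f)) _

lemma arensBCF_sub (n : Ld G) (f h : LUC G) :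
    arensBCF n (f - h) = arensBCF n f - arensBCF n h := by
  ext g
  simp [lTransL_sub]

lemma arensBCF_add (n : Ld G) (f h : LUC G) :
    arensBCF n (f + h) = arensBCF n f + arensBCF n h := by
  ext g
  simp [lTransL_add]

lemma arensBCF_smul (n : Ld G) (c : ℂ) (f : LUC G) :
    arensBCF n (c • f) = c • arensBCF n f := by
  ext g
  simp [lTransL_smul]

lemma lipschitz_arensBCF (n : Ld G) :
    LipschitzWith ‖n‖₊ fun f : LUC G => arensBCF n f := by
  apply LipschitzWith.of_dist_le_mul
  intro f h
  rw [dist_eq_norm, dist_eq_norm, ← arensBCF_sub]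
  have : ‖f - h‖ = ‖(f - h : LUC G)‖ := rfl
  calc ‖arensBCF n (f - h)‖ ≤ ‖n‖ * ‖f - h‖ := norm_arensBCF_le n (f - h)
    _ = ‖n‖₊ * ‖f - h‖ := rfl

lemma lTrans_arensBCF (n : Ld G) (f : LUC G) (g : G) :
    lTrans g (arensBCF n f) = arensBCF n (lTransL g f) := by
  ext x
  simp only [lTrans_apply, arensBCF_apply]
  rw [lTransL_lTransL]

/-- The element `n f` of `LUC(G)`. -/
noncomputable def arensFn (n : Ld G) (f : LUC G) : LUC G :=
  ⟨arensBCF n f, by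
    have e : (fun g : G => lTrans g (arensBCF n f)) =
        (fun h : LUC G => arensBCF n h) ∘ fun g : G => lTransL g f :=
      funext fun g => lTrans_arensBCF n f g
    show Continuous fun g : G => lTrans g (arensBCF n f)
    rw [e]
    exact (lipschitz_arensBCF n).continuous.comp (continuous_lTransL f)⟩

@[simp] lemma arensFn_coe (n : Ld G) (f : LUC G) : (arensFn n f : G →ᵇ ℂ) = arensBCF n f := rfl

lemma norm_arensFn_le (n : Ld G) (f : LUC G) : ‖arensFn n f‖ ≤ ‖n‖ * ‖f‖ :=
  norm_arensBCF_le n f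

/-- The Arens-type product on `LUC(G)^*`: `⟨m · n, f⟩ = ⟨m, n f⟩`. -/
noncomputable def arens (m n : Ld G) : Ld G :=
  LinearMap.mkContinuous
    { toFun := fun f : LUC G => m (arensFn n f)
      map_add' := fun f h => by
        show m (arensFn n (f + h)) = m (arensFn n f) + m (arensFn n h)
        rw [show arensFn n (f + h) = arensFn n f + arensFn n h from
          Subtype.ext (arensBCF_add n f h), map_add]
      map_smul' := fun c f => by
        show m (arensFn n (c • f)) = c • m (arensFn n f)
        rw [show arensFn n (c • f) = c • arensFn n f from
          Subtype.ext (arensBCF_smul n c f), map_smul] }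
    (‖m‖ * ‖n‖)
    (fun f => by
      calc ‖m (arensFn n f)‖ ≤ ‖m‖ * ‖arensFn n f‖ := m.le_opNorm _
        _ ≤ ‖m‖ * (‖n‖ * ‖f‖) :=
            mul_le_mul_of_nonneg_left (norm_arensFn_le n f) (norm_nonneg m)
        _ = ‖m‖ * ‖n‖ * ‖f‖ := by ring)

@[simp] lemma arens_apply (m n : Ld G) (f : LUC G) : arens m n f = m (arensFn n f) := rfl

end LucPaper
namespace LucPaper
variable {G : Type*} [Group G] [TopologicalSpace G] [IsTopologicalGroup G]

/-- Evaluation at a point of `G`, as an element of `LUC(G)^*`. -/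
noncomputable def evalChar (g : G) : Ld G :=
  LinearMap.mkContinuous
    { toFun := fun f : LUC G => (f : G →ᵇ ℂ) g
      map_add' := fun f h => rfl
      map_smul' := fun c f => rfl }
    1 (fun f => by rw [one_mul]; exact (f : G →ᵇ ℂ).norm_coe_le_norm g)

@[simp] lemma evalChar_apply (g : G) (f : LUC G) : evalChar g f = (f : G →ᵇ ℂ) g := rfl

variable (G) in
/-- The `LUC`-compactification `G^{luc}` realized as the set of nonzero multiplicative
functionals in `LUC(G)^*`. -/
def gLuc : Set (Ld G) :=
  {m | m ≠ 0 ∧ ∀ f h : LUC G, m (f * h) = m f * m h}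

variable (G) in
/-- The corona `G^* = G^{luc} \ G` in `LUC(G)^*`. -/
def gStar : Set (Ld G) :=
  gLuc G \ Set.range (evalChar (G := G))

lemma evalChar_mem_gLuc (g : G) : evalChar g ∈ gLuc G := by
  constructor
  · intro h0
    have h1 : evalChar g (1 : LUC G) = 0 := by rw [h0]; rfl
    have h2 : evalChar g (1 : LUC G) = 1 := rfl
    rw [h2] at h1
    exact one_ne_zero h1
  · intro f h
    have : ((f * h : LUC G) : G →ᵇ ℂ) = (f : G →ᵇ ℂ) * (h : G →ᵇ ℂ) := rfl
    simp [this]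

end LucPaper
namespace LucPaper
variable {G : Type*} [Group G] [TopologicalSpace G] [IsTopologicalGroup G]

/-- Membership in `C_0(G)`: vanishing at infinity. -/
def IsC0 (f : G →ᵇ ℂ) : Prop := Tendsto (f : G → ℂ) (cocompact G) (𝓝 0)

variable (G) in
/-- The annihilator `C_0(G)^⊥` of `C_0(G)` in `LUC(G)^*`. -/
noncomputable def C0perp : Submodule ℂ (Ld G) where
  carrier := {m | ∀ f : LUC G, IsC0 (f : G →ᵇ ℂ) → m f = 0}
  add_mem' {m n} hm hn := fun f hf => by
    simp [hm f hf, hn f hf]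
  zero_mem' := fun f _ => rfl
  smul_mem' c m hm := fun f hf => by
    simp [hm f hf]

lemma isC0_lTrans {f : G →ᵇ ℂ} (hf : IsC0 f) (g : G) : IsC0 (lTrans g f) := by
  have h1 : Tendsto (⇑(Homeomorph.mulLeft g)) (cocompact G) (cocompact G) :=
    tendsto_map.mono_right (le_of_eq ((Homeomorph.mulLeft g).map_cocompact))
  have h1' : Tendsto (fun x : G => g * x) (cocompact G) (cocompact G) := h1
  exact hf.comp h1'

lemma isC0_rTransBCF {f : G →ᵇ ℂ} (hf : IsC0 f) (x : G) :
    IsC0 (f.compContinuous ⟨fun g : G => g * x, continuous_id.mul continuous_const⟩) := by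
  have h1 : Tendsto (⇑(Homeomorph.mulRight x)) (cocompact G) (cocompact G) :=
    tendsto_map.mono_right (le_of_eq ((Homeomorph.mulRight x).map_cocompact))
  have h1' : Tendsto (fun g : G => g * x) (cocompact G) (cocompact G) := h1
  exact hf.comp h1'

/-- `C_0(G)^⊥` is a left ideal for the Arens product: if `n ∈ C_0(G)^⊥` then `m · n ∈ C_0(G)^⊥`
for every `m`. -/
lemma arens_mem_C0perp_left (m : Ld G) {n : Ld G} (hn : n ∈ C0perp G) :
    arens m n ∈ C0perp G := by
  intro f hf
  have hz : arensFn n f = 0 := by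
    apply Subtype.ext
    ext g
    exact hn (lTransL g f) (isC0_lTrans hf g)
  rw [arens_apply, hz, map_zero]

/-- Multiplying an element of `C_0(G)^⊥` by a point evaluation on the right stays in
`C_0(G)^⊥`. -/
lemma arens_evalChar_mem_C0perp {m : Ld G} (hm : m ∈ C0perp G) (x : G) :
    arens m (evalChar x) ∈ C0perp G := by
  intro f hf
  rw [arens_apply]
  apply hm
  show IsC0 (arensBCF (evalChar x) f)
  have e : (arensBCF (evalChar x) f : G → ℂ) =
      ((f : G →ᵇ ℂ).compContinuous ⟨fun g : G => g * x, continuous_id.mul continuous_const⟩ :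
        G → ℂ) := by
    funext g
    rfl
  show Tendsto (arensBCF (evalChar x) f : G → ℂ) (cocompact G) (𝓝 0)
  rw [e]
  exact isC0_rTransBCF hf x

/-- The multiplication on `C_0(G)^⊥` induced by the Arens product. -/
noncomputable instance : Mul (C0perp G) :=
  ⟨fun m n => ⟨arens m.1 n.1, arens_mem_C0perp_left m.1 n.2⟩⟩

@[simp] lemma C0perp_mul_coe (m n : C0perp G) : ((m * n : C0perp G) : Ld G) = arens m.1 n.1 := rfl

end LucPaper
namespace LucPaper
variable {G : Type*} [Group G] [TopologicalSpace G] [IsTopologicalGroup G]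

section WeakStar

variable {H : Type*} [Group H] [TopologicalSpace H] [IsTopologicalGroup H]

/-- Weak-star continuity for a map `C_0(G)^⊥ → C_0(H)^⊥`, phrased via filters:
whenever a filter converges pointwise (weak-star) to `m`, the images converge pointwise
(weak-star) to the image of `m`. -/
def WStarContinuousC0 (T : C0perp G → C0perp H) : Prop :=
  ∀ (l : Filter (C0perp G)) (m : C0perp G),
    (∀ f : LUC G, Tendsto (fun n : C0perp G => (n : Ld G) f) l (𝓝 ((m : Ld G) f))) →
    ∀ f : LUC H, Tendsto (fun n : C0perp G => (T n : Ld H) f) l (𝓝 ((T m : Ld H) f))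

/-- Weak-star continuity for a map `LUC(G)^* → LUC(H)^*`, phrased via filters. -/
def WStarContinuousD (T : Ld G → Ld H) : Prop :=
  ∀ (l : Filter (Ld G)) (m : Ld G),
    (∀ f : LUC G, Tendsto (fun n : Ld G => n f) l (𝓝 (m f))) →
    ∀ f : LUC H, Tendsto (fun n : Ld G => T n f) l (𝓝 (T m f))

end WeakStar

section WeakDualSide

/-- `LUC(G)^*` equipped with its weak-star topology. -/
noncomputable abbrev LdW (G : Type*) [Group G] [TopologicalSpace G] [IsTopologicalGroup G] :=
  WeakDual ℂ (LUC G)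

variable (G) in
/-- The `LUC`-compactification `G^{luc}` as a subset of the weak-star dual. -/
def gLucW : Set (LdW G) :=
  {m | m ≠ 0 ∧ ∀ f h : LUC G, m (f * h) = m f * m h}

/-- Evaluation at a point of `G` as an element of the weak-star dual. -/
noncomputable def evalCharW (g : G) : LdW G :=
  StrongDual.toWeakDual (evalChar g)

variable (G) in
/-- The corona `G^* = G^{luc} \ G` inside the weak-star dual. -/
def gStarW : Set (LdW G) :=
  gLucW G \ Set.range (evalCharW (G := G))

/-- The Arens product transported to the weak-star dual. -/
noncomputable def arensW (m n : LdW G) : LdW G :=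
  StrongDual.toWeakDual
    (arens (WeakDual.toStrongDual m) (WeakDual.toStrongDual n))

lemma evalCharW_mem_gLucW (g : G) : evalCharW g ∈ gLucW G := by
  have h := evalChar_mem_gLuc (g := g)
  constructor
  · intro h0
    apply h.1
    have : WeakDual.toStrongDual (evalCharW g) = WeakDual.toStrongDual (0 : LdW G) := by
      rw [h0]
    simpa [evalCharW] using this
  · intro f k
    exact h.2 f k

end WeakDualSide

section FSpace

/-- `X` is an F-space: every bounded continuous real function `f` factors as `f = k·|f|`
with `k` bounded continuous. -/
def IsFSpace (X : Type*) [TopologicalSpace X] : Prop :=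
  ∀ f : X →ᵇ ℝ, ∃ k : X →ᵇ ℝ, ∀ x : X, f x = k x * |f x|

/-- A P-point: every `G_δ` set containing the point is a neighbourhood of the point. -/
def IsPPoint {X : Type*} [TopologicalSpace X] (p : X) : Prop :=
  ∀ s : Set X, p ∈ s → (∃ U : ℕ → Set X, (∀ n, IsOpen (U n)) ∧ s = ⋂ n, U n) → s ∈ 𝓝 p

end FSpace

end LucPaper




namespace LucPaper
variable {G : Type*} [Group G] [TopologicalSpace G] [IsTopologicalGroup G]

/-! ### Basic algebraic facts about the Arens product and evaluations -/

lemma lTransL_one (f : LUC G) : lTransL (1 : G) f = f := by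
  apply Subtype.ext; ext x; show (f : G →ᵇ ℂ) (1 * x) = (f : G →ᵇ ℂ) x; rw [one_mul]

lemma arensFn_evalChar_one (f : LUC G) : arensFn (evalChar (1 : G)) f = f := by
  apply Subtype.ext; ext g
  show (f : G →ᵇ ℂ) (g * 1) = (f : G →ᵇ ℂ) g
  rw [mul_one]

lemma arens_evalChar_one_left (m : Ld G) : arens (evalChar (1 : G)) m = m := by
  ext f
  show m (lTransL 1 f) = m f
  rw [lTransL_one]

lemma arens_evalChar_one_right (m : Ld G) : arens m (evalChar (1 : G)) = m := by
  ext f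
  rw [arens_apply, arensFn_evalChar_one]

lemma arens_evalChar_evalChar (a b : G) :
    arens (evalChar a) (evalChar b) = evalChar (a * b) := by
  ext f; rfl

/-! ### Characters of `LUC G` -/

lemma char_one {u : Ld G} (hu : u ∈ gLuc G) : u 1 = 1 := by
  have h1 : u 1 = u 1 * u 1 := by
    have := hu.2 1 1
    rwa [one_mul] at this
  rcases eq_or_ne (u 1) 0 with h0 | h0
  · exfalso
    apply hu.1
    ext f
    have h2 := hu.2 f 1
    rw [mul_one] at h2
    show u f = 0
    rw [h2, h0, mul_zero]
  · exact (mul_left_cancel₀ h0 (by rw [mul_one]; exact h1)).symm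

lemma char_pow {u : Ld G} (hu : u ∈ gLuc G) (f : LUC G) (n : ℕ) :
    u (f ^ (n + 1)) = (u f) ^ (n + 1) := by
  induction n with
  | zero => simp
  | succ n ih =>
    rw [pow_succ f (n + 1), hu.2, ih, ← pow_succ]

lemma char_norm_le {u : Ld G} (hu : u ∈ gLuc G) (f : LUC G) : ‖u f‖ ≤ ‖f‖ := by
  by_contra hlt
  push_neg at hlt
  have hf0 : ‖f‖ ≠ 0 := by
    intro h
    rw [h] at hlt
    have : f = 0 := norm_eq_zero.mp h
    rw [this, map_zero, norm_zero] at hlt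
    exact lt_irrefl 0 hlt
  have hfpos : 0 < ‖f‖ := lt_of_le_of_ne (norm_nonneg f) (Ne.symm hf0)
  set r : ℝ := ‖u f‖ / ‖f‖ with hr_def
  have hr : 1 < r := (one_lt_div hfpos).2 hlt
  have hb : ∀ n : ℕ, r ^ (n + 1) ≤ ‖u‖ := by
    intro n
    have h1 : ‖u (f ^ (n + 1))‖ ≤ ‖u‖ * ‖f ^ (n + 1)‖ := u.le_opNorm _
    rw [char_pow hu, norm_pow] at h1
    have h2 : ‖f ^ (n + 1)‖ ≤ ‖f‖ ^ (n + 1) := norm_pow_le' f (Nat.succ_pos n)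
    have h3 : ‖u f‖ ^ (n + 1) ≤ ‖u‖ * ‖f‖ ^ (n + 1) :=
      h1.trans (mul_le_mul_of_nonneg_left h2 (norm_nonneg u))
    rw [hr_def, div_pow, div_le_iff₀ (pow_pos hfpos _)]
    exact h3
  have ht : Tendsto (fun n : ℕ => r ^ (n + 1)) atTop atTop :=
    (tendsto_pow_atTop_atTop_of_one_lt hr).comp (tendsto_add_atTop_nat 1)
  obtain ⟨n, hn⟩ := (ht.eventually_gt_atTop ‖u‖).exists
  exact absurd (hb n) (not_le.mpr hn)

/-! ### Star closure and inverses in `LUC` -/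

lemma star_mem_luc {f : G →ᵇ ℂ} (hf : f ∈ LUC G) : star f ∈ LUC G := by
  have e : (fun g : G => lTrans g (star f)) = star ∘ fun g : G => lTrans g f := by
    funext g
    ext x
    rfl
  show Continuous fun g : G => lTrans g (star f)
  rw [e]
  exact continuous_star.comp hf

lemma dist_inv_le_dist {a b : ℂ} (ha : 1 ≤ ‖a‖) (hb : 1 ≤ ‖b‖) :
    dist a⁻¹ b⁻¹ ≤ dist a b := by
  have ha0 : a ≠ 0 := by intro h; rw [h, norm_zero] at ha; linarith
  have hb0 : b ≠ 0 := by intro h; rw [h, norm_zero] at hb; linarith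
  rw [dist_eq_norm, dist_eq_norm]
  have e : a⁻¹ - b⁻¹ = (b - a) * (a⁻¹ * b⁻¹) := by
    field_simp
  rw [e, norm_mul, norm_mul, norm_inv, norm_inv, ← norm_sub_rev]
  calc ‖a - b‖ * (‖a‖⁻¹ * ‖b‖⁻¹) ≤ ‖a - b‖ * 1 := by
        apply mul_le_mul_of_nonneg_left _ (norm_nonneg _)
        exact mul_le_one₀ (inv_le_one_of_one_le₀ ha) (inv_nonneg.2 (norm_nonneg _)) (inv_le_one_of_one_le₀ hb)
    _ = ‖a - b‖ := mul_one _

lemma exists_inv_luc (F : LUC G) (hF : ∀ x, 1 ≤ ‖(F : G →ᵇ ℂ) x‖) :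
    ∃ w : LUC G, ∀ x, (w : G →ᵇ ℂ) x = ((F : G →ᵇ ℂ) x)⁻¹ := by
  have hF0 : ∀ x, (F : G →ᵇ ℂ) x ≠ 0 := by
    intro x h
    have := hF x
    rw [h, norm_zero] at this
    linarith
  set wB : G →ᵇ ℂ := BoundedContinuousFunction.ofNormedAddCommGroup
    (fun x => ((F : G →ᵇ ℂ) x)⁻¹)
    (((F : G →ᵇ ℂ).continuous).inv₀ hF0) 1
    (fun x => by
      rw [norm_inv]
      exact inv_le_one_of_one_le₀ (hF x)) with hwB
  have hwB_apply : ∀ x, wB x = ((F : G →ᵇ ℂ) x)⁻¹ := fun x => rfl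
  have hwmem : wB ∈ LUC G := by
    show Continuous fun g : G => lTrans g wB
    rw [continuous_iff_continuousAt]
    intro g₀
    rw [ContinuousAt, Metric.tendsto_nhds]
    intro ε hε
    have hc : Tendsto (fun g : G => lTrans g (F : G →ᵇ ℂ)) (𝓝 g₀)
        (𝓝 (lTrans g₀ (F : G →ᵇ ℂ))) := F.2.continuousAt
    filter_upwards [Metric.tendsto_nhds.1 hc ε hε] with g hg
    refine lt_of_le_of_lt ?_ hg
    apply (BoundedContinuousFunction.dist_le dist_nonneg).2
    intro x
    have h1 : dist (((F : G →ᵇ ℂ) (g * x))⁻¹) (((F : G →ᵇ ℂ) (g₀ * x))⁻¹) ≤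
        dist ((F : G →ᵇ ℂ) (g * x)) ((F : G →ᵇ ℂ) (g₀ * x)) :=
      dist_inv_le_dist (hF _) (hF _)
    have h2 : dist ((lTrans g (F : G →ᵇ ℂ)) x) ((lTrans g₀ (F : G →ᵇ ℂ)) x) ≤
        dist (lTrans g (F : G →ᵇ ℂ)) (lTrans g₀ (F : G →ᵇ ℂ)) :=
      BoundedContinuousFunction.dist_coe_le_dist x
    exact h1.trans h2
  exact ⟨⟨wB, hwmem⟩, hwB_apply⟩

end LucPaper


namespace LucPaper
open scoped Pointwise
variable {G : Type*} [Group G] [TopologicalSpace G] [IsTopologicalGroup G]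

lemma norm_lTrans_sub_near_one [LocallyCompactSpace G] {f : G →ᵇ ℂ}
    (hf : IsCompact (tsupport ⇑f)) {ε : ℝ} (hε : 0 < ε) :
    ∀ᶠ h in 𝓝 (1 : G), ‖lTrans h f - f‖ ≤ ε := by
  obtain ⟨V, hVc, hVn⟩ := exists_compact_mem_nhds (1 : G)
  set K := tsupport ⇑f with hK
  set L := V⁻¹ * K ∪ K with hLdef
  have hL : IsCompact L := (hVc.inv.mul hf).union hf
  have h1 : ∀ᶠ h in 𝓝 (1 : G), ∀ y ∈ L, ‖f (h * y) - f y‖ < ε := by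
    apply hL.eventually_forall_of_forall_eventually
    intro y _
    have hcont : Continuous fun z : G × G => ‖f (z.1 * z.2) - f z.2‖ :=
      ((f.continuous.comp (continuous_fst.mul continuous_snd)).sub
        (f.continuous.comp continuous_snd)).norm
    have hval : ‖f ((1 : G) * y) - f y‖ < ε := by
      rw [one_mul, sub_self, norm_zero]; exact hε
    exact (hcont.tendsto ((1 : G), y)).eventually_lt_const hval
  filter_upwards [h1, hVn] with h hh hhV
  apply (BoundedContinuousFunction.norm_le hε.le).2
  intro x
  rcases em (x ∈ L) with hx | hx
  · exact (hh x hx).le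
  · have hx1 : f x = 0 := image_eq_zero_of_notMem_tsupport (fun hc => hx (Or.inr hc))
    have hx2 : f (h * x) = 0 := by
      apply image_eq_zero_of_notMem_tsupport
      intro hc
      apply hx
      refine Or.inl ?_
      have : h⁻¹ * (h * x) ∈ V⁻¹ * K := Set.mul_mem_mul (Set.inv_mem_inv.mpr hhV) hc
      rwa [inv_mul_cancel_left] at this
    show ‖lTrans h f x - f x‖ ≤ ε
    rw [lTrans_apply, hx1, hx2, sub_self, norm_zero]
    exact hε.le

lemma luc_of_compact_tsupport [LocallyCompactSpace G] {f : G →ᵇ ℂ}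
    (hf : IsCompact (tsupport ⇑f)) : f ∈ LUC G := by
  show Continuous fun g : G => lTrans g f
  rw [continuous_iff_continuousAt]
  intro g₀
  rw [ContinuousAt, Metric.tendsto_nhds]
  intro ε hε
  have hmap : Tendsto (fun g : G => g * g₀⁻¹) (𝓝 g₀) (𝓝 1) := by
    have hc : Continuous fun g : G => g * g₀⁻¹ := continuous_id.mul continuous_const
    have := hc.tendsto g₀
    rwa [mul_inv_cancel] at this
  filter_upwards [hmap.eventually (norm_lTrans_sub_near_one hf (half_pos hε))] with g hg
  have key : lTrans g f - lTrans g₀ f = lTrans g₀ (lTrans (g * g₀⁻¹) f - f) := by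
    rw [lTrans_sub, lTrans_lTrans, inv_mul_cancel_right]
  rw [dist_eq_norm, key]
  calc ‖lTrans g₀ (lTrans (g * g₀⁻¹) f - f)‖ ≤ ‖lTrans (g * g₀⁻¹) f - f‖ :=
        norm_lTrans_le _ _
    _ ≤ ε / 2 := hg
    _ < ε := half_lt_self hε

variable (G) in
lemma exists_c0_luc_one [T2Space G] [LocallyCompactSpace G] :
    ∃ f : LUC G, IsC0 (f : G →ᵇ ℂ) ∧ (f : G →ᵇ ℂ) 1 = 1 := by
  obtain ⟨K, hKc, hKn⟩ := exists_compact_mem_nhds (1 : G)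
  have hsub : closure (interior K) ⊆ K := closure_minimal interior_subset hKc.isClosed
  have hclc : IsCompact (closure (interior K)) :=
    IsCompact.of_isClosed_subset hKc isClosed_closure hsub
  obtain ⟨f, hsupp, hone, hrange⟩ := exists_tsupport_one_of_isOpen_isClosed
    isOpen_interior hclc isClosed_singleton
    (Set.singleton_subset_iff.mpr (mem_interior_iff_mem_nhds.mpr hKn))
  set fB : G →ᵇ ℂ := BoundedContinuousFunction.ofNormedAddCommGroup
    (fun x => (f x : ℂ)) (Complex.continuous_ofReal.comp f.continuous) 1
    (fun x => by
      rcases hrange x with ⟨h0, h1⟩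
      rw [Complex.norm_real, Real.norm_eq_abs, abs_of_nonneg h0]; exact h1) with hfB
  have happly : ∀ x, fB x = (f x : ℂ) := fun _ => rfl
  have hsupp2 : tsupport ⇑fB ⊆ tsupport ⇑f := by
    apply closure_mono
    intro x hx
    simp only [Function.mem_support] at hx ⊢
    intro h0
    exact hx (by rw [happly, h0, Complex.ofReal_zero])
  have htsf : IsCompact (tsupport ⇑f) :=
    IsCompact.of_isClosed_subset hKc (isClosed_tsupport _) (hsupp.trans interior_subset)
  have htsfB : IsCompact (tsupport ⇑fB) :=
    IsCompact.of_isClosed_subset htsf (isClosed_tsupport _) hsupp2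
  refine ⟨⟨fB, luc_of_compact_tsupport htsfB⟩, ?_, ?_⟩
  · show Tendsto (fB : G → ℂ) (cocompact G) (𝓝 0)
    have hev : ∀ᶠ x in cocompact G, fB x = 0 := by
      rw [Filter.eventually_iff, mem_cocompact]
      exact ⟨tsupport ⇑fB, htsfB, fun x hx => image_eq_zero_of_notMem_tsupport hx⟩
    exact Tendsto.congr' (Filter.EventuallyEq.symm hev) tendsto_const_nhds
  · show fB 1 = 1
    rw [happly, hone (Set.mem_singleton 1), Pi.one_apply, Complex.ofReal_one]

end LucPaper


namespace LucPaper
variable {G : Type*} [Group G] [TopologicalSpace G] [IsTopologicalGroup G]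

lemma continuous_normSqC : Continuous fun z : ℂ => Complex.normSq z := by
  have e : (fun z : ℂ => Complex.normSq z) = fun z : ℂ => z.re * z.re + z.im * z.im :=
    funext fun z => Complex.normSq_apply z
  rw [e]
  exact (Complex.continuous_re.mul Complex.continuous_re).add
    (Complex.continuous_im.mul Complex.continuous_im)

lemma char_eq_evalChar_of_not_annihilating [T2Space G] {u : Ld G} (hu : u ∈ gLuc G)
    {f₀ : LUC G} (hc0 : IsC0 (f₀ : G →ᵇ ℂ)) (hne : u f₀ ≠ 0) :
    ∃ y : G, u = evalChar y := by
  classical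
  set c := u f₀ with hc
  set f₁ : LUC G := c⁻¹ • f₀ with hf₁def
  have hf₁coe : (f₁ : G →ᵇ ℂ) = c⁻¹ • (f₀ : G →ᵇ ℂ) := rfl
  have huf₁ : u f₁ = 1 := by
    rw [hf₁def, map_smul, smul_eq_mul, ← hc, inv_mul_cancel₀ hne]
  have hc0₁ : IsC0 (f₁ : G →ᵇ ℂ) := by
    show Tendsto ((f₁ : G →ᵇ ℂ) : G → ℂ) (cocompact G) (𝓝 0)
    have e : ((f₁ : G →ᵇ ℂ) : G → ℂ) = fun x => c⁻¹ * (f₀ : G →ᵇ ℂ) x := by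
      funext x; rw [hf₁coe]; rfl
    rw [e]
    have := hc0.const_mul c⁻¹
    rwa [mul_zero] at this
  -- the compact set where `f₁` is not small
  set K : Set G := {x : G | 1 / 2 ≤ ‖(f₁ : G →ᵇ ℂ) x‖} with hKdef
  have hKclosed : IsClosed K :=
    isClosed_le continuous_const ((f₁ : G →ᵇ ℂ).continuous.norm)
  have hKsmall : {x : G | dist ((f₁ : G →ᵇ ℂ) x) 0 < 1 / 2} ∈ cocompact G :=
    Metric.tendsto_nhds.1 hc0₁ (1 / 2) (by norm_num)
  obtain ⟨C, hCcomp, hCsub⟩ := mem_cocompact.mp hKsmall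
  have hKC : K ⊆ C := by
    intro x hx
    by_contra hxC
    have := hCsub hxC
    rw [Set.mem_setOf_eq, dist_zero_right] at this
    exact absurd hx (by simpa [hKdef] using not_le.mpr this)
  have hK : IsCompact K := IsCompact.of_isClosed_subset hCcomp hKclosed hKC
  have hbound := char_norm_le hu
  have hKne : K.Nonempty := by
    by_contra hemp
    rw [Set.not_nonempty_iff_eq_empty] at hemp
    have hle : ‖f₁‖ ≤ 1 / 2 := by
      apply (BoundedContinuousFunction.norm_le (by norm_num : (0:ℝ) ≤ 1/2)).2
      intro x
      by_contra hgt
      push_neg at hgt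
      have : x ∈ K := le_of_lt hgt
      rw [hemp] at this
      exact this
    have h1 := hbound f₁
    rw [huf₁, norm_one] at h1
    linarith
  have hmain : ∃ y ∈ K, ∀ f : LUC G, u f = 0 → (f : G →ᵇ ℂ) y = 0 := by
    by_contra hcon
    push_neg at hcon
    have hsel : ∀ i : K, ∃ f : LUC G, u f = 0 ∧ (f : G →ᵇ ℂ) i.1 ≠ 0 :=
      fun i => hcon i.1 i.2
    choose ff hff1 hff2 using hsel
    set q : K → LUC G := fun i =>
      ff i * ⟨star ((ff i : G →ᵇ ℂ)), star_mem_luc (ff i).2⟩ with hq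
    have huq : ∀ i : K, u (q i) = 0 := by
      intro i
      rw [hq]
      show u (ff i * _) = 0
      rw [hu.2, hff1, zero_mul]
    have hqval : ∀ (i : K) (x : G),
        (q i : G →ᵇ ℂ) x = (Complex.normSq ((ff i : G →ᵇ ℂ) x) : ℂ) := by
      intro i x
      show ((ff i : G →ᵇ ℂ) * star ((ff i : G →ᵇ ℂ))) x = _
      rw [BoundedContinuousFunction.mul_apply, BoundedContinuousFunction.star_apply]
      exact Complex.mul_conj _
    set U : K → Set G := fun i => {x | (ff i : G →ᵇ ℂ) x ≠ 0} with hU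
    have hUopen : ∀ i : K, IsOpen (U i) := by
      intro i
      have : U i = (fun x => (ff i : G →ᵇ ℂ) x) ⁻¹' ({0}ᶜ) := rfl
      rw [this]
      exact (isClosed_singleton.preimage (ff i : G →ᵇ ℂ).continuous).isOpen_compl
    have hcover : K ⊆ ⋃ i : K, U i := fun x hx =>
      Set.mem_iUnion.2 ⟨⟨x, hx⟩, hff2 ⟨x, hx⟩⟩
    obtain ⟨t, ht⟩ := hK.elim_finite_subcover U hUopen hcover
    set g : LUC G := ∑ i ∈ t, q i with hg
    have hug : u g = 0 := by
      rw [hg, map_sum]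
      exact Finset.sum_eq_zero fun i _ => huq i
    set R : G → ℝ := fun x => ∑ i ∈ t, Complex.normSq ((ff i : G →ᵇ ℂ) x) with hR
    have hgval : ∀ x : G, (g : G →ᵇ ℂ) x = ((R x : ℝ) : ℂ) := by
      intro x
      have hcoe : (g : G →ᵇ ℂ) = ∑ i ∈ t, (q i : G →ᵇ ℂ) := by
        rw [hg]
        exact map_sum ((LUC G).val) q t
      rw [hcoe, BoundedContinuousFunction.coe_sum, Finset.sum_apply]
      rw [hR]
      push_cast
      exact Finset.sum_congr rfl fun i _ => hqval i x
    have hRcont : Continuous R :=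
      continuous_finset_sum _ fun i _ =>
        continuous_normSqC.comp (ff i : G →ᵇ ℂ).continuous
    have hRnonneg : ∀ x, 0 ≤ R x := fun x =>
      Finset.sum_nonneg fun i _ => Complex.normSq_nonneg _
    have hRposK : ∀ x ∈ K, 0 < R x := by
      intro x hx
      obtain ⟨i, hit, hxU⟩ := Set.mem_iUnion₂.mp (ht hx)
      exact Finset.sum_pos' (fun j _ => Complex.normSq_nonneg _)
        ⟨i, hit, Complex.normSq_pos.mpr hxU⟩
    obtain ⟨y₀, hy₀K, hy₀min⟩ := hK.exists_isMinOn hKne hRcont.continuousOn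
    set δ : ℝ := R y₀ with hδdef
    have hδ : 0 < δ := hRposK y₀ hy₀K
    set s : ℝ := 2 * ‖f₁‖ / δ with hs
    have hs0 : 0 ≤ s := div_nonneg (by positivity) hδ.le
    set F : LUC G := 1 + (s : ℂ) • g with hF
    have hFval : ∀ x : G, (F : G →ᵇ ℂ) x = ((1 + s * R x : ℝ) : ℂ) := by
      intro x
      have hcoe : (F : G →ᵇ ℂ) = 1 + (s : ℂ) • (g : G →ᵇ ℂ) := rfl
      rw [hcoe, BoundedContinuousFunction.add_apply, BoundedContinuousFunction.smul_apply,
        BoundedContinuousFunction.coe_one, Pi.one_apply, hgval, smul_eq_mul]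
      push_cast
      ring
    have hpos : ∀ x : G, (0 : ℝ) < 1 + s * R x := by
      intro x
      have := mul_nonneg hs0 (hRnonneg x)
      linarith
    have hFnorm : ∀ x, 1 ≤ ‖(F : G →ᵇ ℂ) x‖ := by
      intro x
      rw [hFval, Complex.norm_real, Real.norm_eq_abs, abs_of_pos (hpos x)]
      have := mul_nonneg hs0 (hRnonneg x)
      linarith
    obtain ⟨w, hw⟩ := exists_inv_luc F hFnorm
    have huF : u F = 1 := by
      rw [hF, map_add, map_smul, hug, smul_zero, add_zero, char_one hu]
    have hFw : F * w = 1 := by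
      apply Subtype.ext
      ext x
      show (F : G →ᵇ ℂ) x * (w : G →ᵇ ℂ) x = 1
      rw [hw x]
      apply mul_inv_cancel₀
      intro h0
      have := hFnorm x
      rw [h0, norm_zero] at this
      linarith
    have huw : u w = 1 := by
      have h2 := hu.2 F w
      rw [hFw, char_one hu, huF, one_mul] at h2
      exact h2.symm
    set a : LUC G := f₁ * w with ha
    have hua : u a = 1 := by rw [ha, hu.2, huf₁, huw, one_mul]
    have hwnorm : ∀ x, ‖(w : G →ᵇ ℂ) x‖ = (1 + s * R x)⁻¹ := by
      intro x
      rw [hw x, norm_inv, hFval, Complex.norm_real, Real.norm_eq_abs, abs_of_pos (hpos x)]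
    have hanorm : ∀ x, ‖(a : G →ᵇ ℂ) x‖ ≤ 1 / 2 := by
      intro x
      have hacoe : (a : G →ᵇ ℂ) x = (f₁ : G →ᵇ ℂ) x * (w : G →ᵇ ℂ) x := rfl
      rw [hacoe, norm_mul, hwnorm]
      rcases em (x ∈ K) with hx | hx
      · have h1 : ‖(f₁ : G →ᵇ ℂ) x‖ ≤ ‖f₁‖ := (f₁ : G →ᵇ ℂ).norm_coe_le_norm x
        have h2 : δ ≤ R x := isMinOn_iff.mp hy₀min x hx
        have h3 : (1 + s * R x)⁻¹ ≤ (1 + 2 * ‖f₁‖)⁻¹ := by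
          apply inv_anti₀ (by linarith [norm_nonneg f₁])
          have : s * δ = 2 * ‖f₁‖ := div_mul_cancel₀ _ hδ.ne'
          nlinarith [mul_le_mul_of_nonneg_left h2 hs0]
        have h4 : ‖(f₁ : G →ᵇ ℂ) x‖ * (1 + s * R x)⁻¹ ≤ ‖f₁‖ * (1 + 2 * ‖f₁‖)⁻¹ :=
          mul_le_mul h1 h3 (inv_nonneg.mpr (hpos x).le) (norm_nonneg f₁)
        refine h4.trans ?_
        have hd : (0:ℝ) < 1 + 2 * ‖f₁‖ := by positivity
        rw [← div_eq_mul_inv, div_le_iff₀ hd]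
        linarith [norm_nonneg f₁]
      · have h1 : ‖(f₁ : G →ᵇ ℂ) x‖ ≤ 1 / 2 := le_of_not_ge hx
        have h2 : (1 + s * R x)⁻¹ ≤ 1 :=
          inv_le_one_of_one_le₀ (by linarith [mul_nonneg hs0 (hRnonneg x)])
        calc ‖(f₁ : G →ᵇ ℂ) x‖ * (1 + s * R x)⁻¹ ≤ (1/2) * 1 :=
              mul_le_mul h1 h2 (inv_nonneg.mpr (hpos x).le) (by norm_num)
          _ = 1 / 2 := mul_one _
    have hnorm_a : ‖a‖ ≤ 1 / 2 :=
      (BoundedContinuousFunction.norm_le (by norm_num : (0:ℝ) ≤ 1/2)).2 hanorm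
    have h5 := hbound a
    rw [hua, norm_one] at h5
    linarith
  obtain ⟨y, hyK, hker⟩ := hmain
  refine ⟨y, ?_⟩
  ext f
  have h5 : u (f - u f • 1) = 0 := by
    rw [map_sub, map_smul, smul_eq_mul, char_one hu, mul_one, sub_self]
  have h6 := hker _ h5
  have hcoe : ((f - u f • (1 : LUC G) : LUC G) : G →ᵇ ℂ)
      = (f : G →ᵇ ℂ) - u f • (1 : G →ᵇ ℂ) := rfl
  rw [hcoe, BoundedContinuousFunction.sub_apply, BoundedContinuousFunction.smul_apply,
    BoundedContinuousFunction.coe_one, Pi.one_apply, smul_eq_mul, mul_one, sub_eq_zero] at h6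
  exact h6.symm

end LucPaper


open LucPaper Filter Topology
open scoped BoundedContinuousFunction

/-- A surjective semigroup homomorphism `φ : G^{luc} → H^{luc}` satisfies
`φ(e_G) = e_H` and maps `G` into `H`. -/
theorem surjective_hom_maps_G_into_H
    {G : Type*} [Group G] [TopologicalSpace G] [IsTopologicalGroup G]
    [T2Space G] [LocallyCompactSpace G]
    {H : Type*} [Group H] [TopologicalSpace H] [IsTopologicalGroup H]
    [T2Space H] [LocallyCompactSpace H]
    (φ : gLuc G → gLuc H)
    (hhom : ∀ p q r : gLuc G, arens p.1 q.1 = r.1 → arens (φ p).1 (φ q).1 = (φ r).1)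
    (hsurj : Function.Surjective φ) :
    (φ ⟨evalChar (1 : G), evalChar_mem_gLuc 1⟩).1 = evalChar (1 : H) ∧
      ∀ x : G, ∃ y : H, (φ ⟨evalChar x, evalChar_mem_gLuc x⟩).1 = evalChar y := by
  have hid : (φ ⟨evalChar (1 : G), evalChar_mem_gLuc 1⟩).1 = evalChar (1 : H) := by
    obtain ⟨p, hp⟩ := hsurj ⟨evalChar (1 : H), evalChar_mem_gLuc 1⟩
    have h1 : arens p.1 (⟨evalChar (1 : G), evalChar_mem_gLuc 1⟩ : gLuc G).1 = p.1 :=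
      arens_evalChar_one_right p.1
    have h2 := hhom p ⟨evalChar (1 : G), evalChar_mem_gLuc 1⟩ p h1
    rw [hp] at h2
    have h2' : arens (evalChar (1 : H)) (φ ⟨evalChar (1 : G), evalChar_mem_gLuc 1⟩).1
        = evalChar (1 : H) := h2
    rw [← h2', arens_evalChar_one_left]
  refine ⟨hid, ?_⟩
  intro x
  by_contra hcon
  push_neg at hcon
  set px : gLuc G := ⟨evalChar x, evalChar_mem_gLuc x⟩ with hpx
  set u := (φ px).1 with hudef
  have hu : u ∈ gLuc H := (φ px).2
  have hann : ∀ f : LUC H, IsC0 (f : H →ᵇ ℂ) → u f = 0 := by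
    intro f hf
    by_contra h0
    obtain ⟨y, hy⟩ := char_eq_evalChar_of_not_annihilating hu hf h0
    exact hcon y hy
  set px' : gLuc G := ⟨evalChar x⁻¹, evalChar_mem_gLuc x⁻¹⟩ with hpx'
  have harens : arens px'.1 px.1 = (⟨evalChar (1 : G), evalChar_mem_gLuc 1⟩ : gLuc G).1 := by
    show arens (evalChar x⁻¹) (evalChar x) = evalChar 1
    rw [arens_evalChar_evalChar, inv_mul_cancel]
  have h3 := hhom px' px ⟨evalChar (1 : G), evalChar_mem_gLuc 1⟩ harens
  rw [hid] at h3
  have humem : u ∈ C0perp H := hann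
  have hmem : arens (φ px').1 u ∈ C0perp H := arens_mem_C0perp_left _ humem
  rw [h3] at hmem
  obtain ⟨f, hfC0, hf1⟩ := exists_c0_luc_one H
  have hz := hmem f hfC0
  rw [evalChar_apply, hf1] at hz
  exact one_ne_zero hz
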